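/- arXiv:2307.12162 — 3 statements merged into one kernel-verified Lean document; each statement's English description precedes it below -/
import Mathlib

section
/- Let μ be a pairwise-independent ensemble with M' ≥ 2 codewords and marginal Q, and let ρ ≥ 1. Then for every message index m, the fractional moment of the maximum-likelihood error probability satisfies E_μ[ P_{e,m}(C)^{1/ρ} ] ≤ (M' − 1) · ∑_{x,x'∈𝒳^n} Q(x)Q(x')·Z(x,x')^{1/ρ}. -/
open scoped Classical

/-- `W` is a channel: nonnegative, and each row sums to one. -/
def IsChannel {𝒳 𝒴 : Type*} [Fintype 𝒴] (W : 𝒳 → 𝒴 → ℝ) : Prop :=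
  (∀ x y, 0 ≤ W x y) ∧ ∀ x, ∑ y, W x y = 1

/-- Maximum-likelihood error probability of message `m` under code `c`
(ties counted as errors). -/
noncomputable def Pem {𝒳 𝒴 : Type*} [Fintype 𝒴] {M : ℕ}
    (W : 𝒳 → 𝒴 → ℝ) (c : Fin M → 𝒳) (m : Fin M) : ℝ :=
  ∑ y, W (c m) y * (if ∃ k, k ≠ m ∧ W (c m) y ≤ W (c k) y then (1:ℝ) else 0)

/-- Bhattacharyya coefficient between inputs `x` and `x'`. -/
noncomputable def Bhat {𝒳 𝒴 : Type*} [Fintype 𝒴] (W : 𝒳 → 𝒴 → ℝ) (x x' : 𝒳) : ℝ :=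
  ∑ y, Real.sqrt (W x y * W x' y)

/-- `p` is a probability mass function on a finite type. -/
def IsPMF {α : Type*} [Fintype α] (p : α → ℝ) : Prop :=
  (∀ a, 0 ≤ p a) ∧ ∑ a, p a = 1

/-- Probability of the event `S` under the pmf `μ`. -/
noncomputable def pmfProb {α : Type*} [Fintype α] (μ : α → ℝ) (S : α → Prop) : ℝ :=
  ∑ a, if S a then μ a else 0

/-- Expectation of `f` under the pmf `μ`. -/
noncomputable def pmfExp {α : Type*} [Fintype α] (μ : α → ℝ) (f : α → ℝ) : ℝ :=
  ∑ a, μ a * f a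

/-- `μ` is a pairwise-independent ensemble of `M` codewords with marginal `Q`:
each codeword has law `Q` and each pair of distinct codewords has law `Q × Q`. -/
def PairwiseIndepEnsemble {𝒳 : Type*} [Fintype 𝒳] {M : ℕ}
    (μ : (Fin M → 𝒳) → ℝ) (Q : 𝒳 → ℝ) : Prop :=
  IsPMF μ ∧ IsPMF Q ∧
  (∀ (m : Fin M) (x : 𝒳), pmfProb μ (fun c => c m = x) = Q x) ∧
  (∀ (m k : Fin M), m ≠ k → ∀ (x x' : 𝒳),
    pmfProb μ (fun c => c m = x ∧ c k = x') = Q x * Q x')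

/-- Binary subadditivity of `rpow` with exponent in `[0,1]`, for reals. -/
lemma real_rpow_add_le_add_rpow {a b p : ℝ} (ha : 0 ≤ a) (hb : 0 ≤ b)
    (hp0 : 0 ≤ p) (hp1 : p ≤ 1) : (a + b) ^ p ≤ a ^ p + b ^ p := by
  lift a to NNReal using ha
  lift b to NNReal using hb
  have := NNReal.rpow_add_le_add_rpow a b hp0 hp1
  exact_mod_cast this

/-- Subadditivity of `rpow` over finite sums, exponent in `(0,1]`. -/
lemma sum_rpow_le {ι : Type*} (s : Finset ι) (f : ι → ℝ) (hf : ∀ i ∈ s, 0 ≤ f i)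
    {p : ℝ} (hp0 : 0 < p) (hp1 : p ≤ 1) :
    (∑ i ∈ s, f i) ^ p ≤ ∑ i ∈ s, f i ^ p := by
  induction s using Finset.cons_induction with
  | empty => simp [Real.zero_rpow hp0.ne']
  | cons a s ha ih =>
    rw [Finset.sum_cons, Finset.sum_cons]
    have hfs : 0 ≤ ∑ i ∈ s, f i :=
      Finset.sum_nonneg fun i hi => hf i (Finset.mem_cons_of_mem hi)
    calc (f a + ∑ i ∈ s, f i) ^ p ≤ f a ^ p + (∑ i ∈ s, f i) ^ p :=
          real_rpow_add_le_add_rpow (hf a (Finset.mem_cons_self a s)) hfs hp0.le hp1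
      _ ≤ f a ^ p + ∑ i ∈ s, f i ^ p := by
          gcongr
          exact ih fun i hi => hf i (Finset.mem_cons_of_mem hi)

lemma pmfExp_pair {𝒳 : Type*} [Fintype 𝒳] {M : ℕ} {μ : (Fin M → 𝒳) → ℝ} {Q : 𝒳 → ℝ}
    (hpair : ∀ (m k : Fin M), m ≠ k → ∀ x x',
      pmfProb μ (fun c => c m = x ∧ c k = x') = Q x * Q x')
    {m k : Fin M} (hmk : m ≠ k) (g : 𝒳 → 𝒳 → ℝ) :
    pmfExp μ (fun c => g (c m) (c k)) = ∑ x, ∑ x', (Q x * Q x') * g x x' := by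
  unfold pmfExp
  have key : ∀ c : Fin M → 𝒳, μ c * g (c m) (c k)
      = ∑ x, ∑ x', if c m = x ∧ c k = x' then μ c * g x x' else 0 := by
    intro c
    simp [ite_and, Finset.sum_ite_eq]
  simp_rw [key]
  rw [Finset.sum_comm]
  refine Finset.sum_congr rfl fun x _ => ?_
  rw [Finset.sum_comm]
  refine Finset.sum_congr rfl fun x' _ => ?_
  rw [← hpair m k hmk x x']
  unfold pmfProb
  rw [Finset.sum_mul]
  refine Finset.sum_congr rfl fun c _ => ?_
  split_ifs <;> simp

/-- bound on the fractional moment of the ML error probability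
for a pairwise-independent ensemble. -/
theorem fractional_moment_bound
    {𝒳 𝒴 : Type*} [Fintype 𝒳] [Fintype 𝒴] [Nonempty 𝒳] [Nonempty 𝒴]
    (n : ℕ) (hn : 1 ≤ n)
    (W : (Fin n → 𝒳) → (Fin n → 𝒴) → ℝ) (hW : IsChannel W)
    (Q : (Fin n → 𝒳) → ℝ) (M' : ℕ) (hM' : 2 ≤ M')
    (μ : (Fin M' → (Fin n → 𝒳)) → ℝ) (hμ : PairwiseIndepEnsemble μ Q)
    (ρ : ℝ) (hρ : 1 ≤ ρ) (m : Fin M') :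
    pmfExp μ (fun c => Pem W c m ^ (1/ρ)) ≤
      ((M' : ℝ) - 1) * ∑ x, ∑ x', Q x * Q x' * Bhat W x x' ^ (1/ρ) := by
  obtain ⟨⟨hμ0, hμ1⟩, ⟨hQ0, hQ1⟩, hmarg, hpair⟩ := hμ
  have hWnn := hW.1
  have hρ0 : 0 < 1/ρ := by positivity
  have hρ1 : 1/ρ ≤ 1 := by
    rw [div_le_one (by linarith)]; linarith
  have hBnn : ∀ x x', 0 ≤ Bhat W x x' :=
    fun x x' => Finset.sum_nonneg fun y _ => Real.sqrt_nonneg _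
  -- Step A : pointwise union/Bhattacharyya bound
  have stepA : ∀ c : Fin M' → (Fin n → 𝒳),
      Pem W c m ≤ ∑ k ∈ Finset.univ.erase m, Bhat W (c m) (c k) := by
    intro c
    unfold Pem Bhat
    rw [Finset.sum_comm]
    refine Finset.sum_le_sum fun y _ => ?_
    by_cases h : ∃ k, k ≠ m ∧ W (c m) y ≤ W (c k) y
    · rw [if_pos h, mul_one]
      obtain ⟨k, hk, hle⟩ := h
      calc W (c m) y = Real.sqrt (W (c m) y * W (c m) y) :=
            (Real.sqrt_mul_self (hWnn _ _)).symm
        _ ≤ Real.sqrt (W (c m) y * W (c k) y) :=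
            Real.sqrt_le_sqrt (mul_le_mul_of_nonneg_left hle (hWnn _ _))
        _ ≤ ∑ k' ∈ Finset.univ.erase m, Real.sqrt (W (c m) y * W (c k') y) :=
            Finset.single_le_sum (f := fun k' => Real.sqrt (W (c m) y * W (c k') y))
              (fun _ _ => Real.sqrt_nonneg _)
              (Finset.mem_erase.2 ⟨hk, Finset.mem_univ k⟩)
    · rw [if_neg h, mul_zero]
      exact Finset.sum_nonneg fun _ _ => Real.sqrt_nonneg _
  have hPemnn : ∀ c, 0 ≤ Pem W c m := fun c =>
    Finset.sum_nonneg fun y _ => mul_nonneg (hWnn _ _) (by positivity)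
  -- Step B : fractional power bound
  have stepB : ∀ c : Fin M' → (Fin n → 𝒳),
      Pem W c m ^ (1/ρ) ≤ ∑ k ∈ Finset.univ.erase m, Bhat W (c m) (c k) ^ (1/ρ) := by
    intro c
    calc Pem W c m ^ (1/ρ)
        ≤ (∑ k ∈ Finset.univ.erase m, Bhat W (c m) (c k)) ^ (1/ρ) :=
          Real.rpow_le_rpow (hPemnn c) (stepA c) hρ0.le
      _ ≤ ∑ k ∈ Finset.univ.erase m, Bhat W (c m) (c k) ^ (1/ρ) :=
          sum_rpow_le _ _ (fun k _ => hBnn _ _) hρ0 hρ1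
  -- Step C : take expectations
  have stepC : pmfExp μ (fun c => Pem W c m ^ (1/ρ)) ≤
      pmfExp μ (fun c => ∑ k ∈ Finset.univ.erase m, Bhat W (c m) (c k) ^ (1/ρ)) :=
    Finset.sum_le_sum fun c _ => mul_le_mul_of_nonneg_left (stepB c) (hμ0 c)
  refine stepC.trans_eq ?_
  -- Step D : exchange expectation and sum, use pairwise independence
  have stepD : pmfExp μ (fun c => ∑ k ∈ Finset.univ.erase m, Bhat W (c m) (c k) ^ (1/ρ))
      = ∑ k ∈ Finset.univ.erase m,
          pmfExp μ (fun c => Bhat W (c m) (c k) ^ (1/ρ)) := by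
    unfold pmfExp
    simp_rw [Finset.mul_sum]
    rw [Finset.sum_comm]
  rw [stepD]
  have stepE : ∀ k ∈ Finset.univ.erase m,
      pmfExp μ (fun c => Bhat W (c m) (c k) ^ (1/ρ))
        = ∑ x, ∑ x', Q x * Q x' * Bhat W x x' ^ (1/ρ) := by
    intro k hk
    exact pmfExp_pair hpair (fun h => (Finset.mem_erase.1 hk).1 h.symm)
      (fun x x' => Bhat W x x' ^ (1/ρ))
  rw [Finset.sum_congr rfl stepE, Finset.sum_const, Finset.card_erase_of_mem (Finset.mem_univ m),
    Finset.card_univ, Fintype.card_fin, nsmul_eq_mul]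
  congr 1
  have : 1 ≤ M' := by omega
  push_cast [this]
  ring
end

section
/- (Lemma 1, finite-length form.) Let μ be a pairwise-independent ensemble with M' ≥ 2 codewords and marginal Q. Then for every ρ ≥ 1, every γ > 0, and every message index m, μ[ P_{e,m}(C) ≤ γ^ρ · ( (M' − 1) · ∑_{x,x'∈𝒳^n} Q(x)Q(x')·Z(x,x')^{1/ρ} )^ρ ] ≥ 1 − 1/γ. Equivalently, with probability at least 1 − 1/γ the exponent −(1/n)·log₂ P_{e,m}(C) (interpreted as +∞ when P_{e,m}(C) = 0) exceeds E_x(ρ,Q) − (ρ/n)·log₂(M' − 1) − (ρ/n)·log₂ γ. -/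
open scoped Classical

/- ----------------- auxiliary lemmas ----------------- -/

lemma aux_real_add_rpow_le_rpow_add {a b ρ : ℝ} (ha : 0 ≤ a) (hb : 0 ≤ b) (hρ : 1 ≤ ρ) :
    a ^ ρ + b ^ ρ ≤ (a + b) ^ ρ := by
  have h := NNReal.add_rpow_le_rpow_add (⟨a, ha⟩ : NNReal) ⟨b, hb⟩ hρ
  have := (NNReal.coe_le_coe.2 h)
  exact this

lemma aux_sum_rpow_le_rpow_sum {ι : Type*} (s : Finset ι) (a : ι → ℝ) {ρ : ℝ}
    (ha : ∀ i ∈ s, 0 ≤ a i) (hρ : 1 ≤ ρ) :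
    ∑ i ∈ s, a i ^ ρ ≤ (∑ i ∈ s, a i) ^ ρ := by
  classical
  induction s using Finset.induction with
  | empty => simp [Real.zero_rpow (by positivity : ρ ≠ 0)]
  | insert _ _ hx ih =>
    rename_i j t
    rw [Finset.sum_insert hx, Finset.sum_insert hx]
    have h1 : ∑ i ∈ t, a i ^ ρ ≤ (∑ i ∈ t, a i) ^ ρ :=
      ih (fun i hi => ha i (Finset.mem_insert_of_mem hi))
    have h2 := aux_real_add_rpow_le_rpow_add (ha j (Finset.mem_insert_self j t))
      (Finset.sum_nonneg fun i hi => ha i (Finset.mem_insert_of_mem hi)) hρ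
    linarith

lemma aux_sum_le_rpow_sum_rpow {ι : Type*} (s : Finset ι) (a : ι → ℝ) {ρ : ℝ}
    (ha : ∀ i ∈ s, 0 ≤ a i) (hρ : 1 ≤ ρ) :
    ∑ i ∈ s, a i ≤ (∑ i ∈ s, a i ^ (1/ρ)) ^ ρ := by
  have hρ0 : ρ ≠ 0 := by positivity
  have : ∑ i ∈ s, a i = ∑ i ∈ s, (a i ^ (1/ρ)) ^ ρ := by
    refine Finset.sum_congr rfl fun i hi => ?_
    rw [← Real.rpow_mul (ha i hi), one_div_mul_cancel hρ0, Real.rpow_one]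
  rw [this]
  exact aux_sum_rpow_le_rpow_sum s _ (fun i hi => Real.rpow_nonneg (ha i hi) _) hρ

lemma aux_pmf_markov {α : Type*} [Fintype α] (μ : α → ℝ)
    (hμ : (∀ a, 0 ≤ μ a) ∧ ∑ a, μ a = 1)
    (U : α → ℝ) (hU : ∀ a, 0 ≤ U a) {γ : ℝ} (hγ : 0 < γ) :
    1 - 1/γ ≤ ∑ a, if U a ≤ γ * (∑ a, μ a * U a) then μ a else 0 := by
  set E := ∑ a, μ a * U a with hE
  have hE0 : 0 ≤ E := Finset.sum_nonneg fun a _ => mul_nonneg (hμ.1 a) (hU a)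
  set S : α → Prop := fun a => U a ≤ γ * E with hS
  have hsplit : (∑ a, if S a then μ a else 0) + (∑ a, if S a then 0 else μ a) = 1 := by
    rw [← Finset.sum_add_distrib]
    simp only [ite_add_ite]
    simpa using hμ.2
  have hPc : (∑ a, if S a then (0:ℝ) else μ a) ≤ 1/γ := by
    rcases eq_or_lt_of_le hE0 with h0 | hpos
    · have : (∑ a, if S a then (0:ℝ) else μ a) = 0 := by
        refine Finset.sum_eq_zero fun a _ => ?_
        by_cases hs : S a
        · simp [hs]
        · simp only [hs, if_false]
          have hUa : 0 < U a := by
            have : γ * E < U a := not_le.mp hs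
            rw [← h0] at this; simpa using this
          by_contra hne
          have hμa : 0 < μ a := lt_of_le_of_ne (hμ.1 a) (Ne.symm hne)
          have : 0 < μ a * U a := mul_pos hμa hUa
          have hle : μ a * U a ≤ E := Finset.single_le_sum
            (fun b _ => mul_nonneg (hμ.1 b) (hU b)) (Finset.mem_univ a)
          rw [← h0] at hle; linarith
      rw [this]; positivity
    · have key : γ * E * (∑ a, if S a then (0:ℝ) else μ a) ≤ E := by
        calc γ * E * (∑ a, if S a then (0:ℝ) else μ a)
            = ∑ a, (if S a then 0 else γ * E * μ a) := by
              rw [Finset.mul_sum]; exact Finset.sum_congr rfl fun a _ => by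
                by_cases hs : S a <;> simp [hs]
          _ ≤ ∑ a, μ a * U a := by
              refine Finset.sum_le_sum fun a _ => ?_
              by_cases hs : S a
              · simp only [hs, if_true]; exact mul_nonneg (hμ.1 a) (hU a)
              · simp only [hs, if_false]
                have : γ * E < U a := not_le.mp hs
                rw [mul_comm (γ * E) (μ a)]
                exact mul_le_mul_of_nonneg_left this.le (hμ.1 a)
          _ = E := rfl
      rw [le_div_iff₀ hγ]
      have hPcnn : 0 ≤ ∑ a, if S a then (0:ℝ) else μ a :=
        Finset.sum_nonneg fun a _ => by by_cases hs : S a <;> simp [hs, hμ.1 a]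
      nlinarith [key]
  linarith [hsplit, hPc, one_div_pos.2 hγ]

/-- Union bound + Bhattacharyya: pointwise bound on the ML error probability. -/
lemma aux_Pem_le_sum_bhat {𝒳 𝒴 : Type*} [Fintype 𝒴] {M : ℕ}
    (W : 𝒳 → 𝒴 → ℝ) (hW : IsChannel W) (c : Fin M → 𝒳) (m : Fin M) :
    Pem W c m ≤ ∑ k ∈ Finset.univ.erase m, Bhat W (c m) (c k) := by
  classical
  unfold Pem Bhat
  rw [Finset.sum_comm]
  refine Finset.sum_le_sum fun y _ => ?_
  by_cases h : ∃ k, k ≠ m ∧ W (c m) y ≤ W (c k) y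
  · rw [if_pos h, mul_one]
    obtain ⟨k0, hk0, hle⟩ := h
    have hmem : k0 ∈ Finset.univ.erase m := Finset.mem_erase.2 ⟨hk0, Finset.mem_univ k0⟩
    have h1 : W (c m) y ≤ Real.sqrt (W (c m) y * W (c k0) y) := by
      have h' := Real.sqrt_le_sqrt (mul_le_mul_of_nonneg_left hle (hW.1 (c m) y))
      rwa [Real.sqrt_mul_self (hW.1 (c m) y)] at h'
    have h2 : Real.sqrt (W (c m) y * W (c k0) y) ≤
        ∑ k ∈ Finset.univ.erase m, Real.sqrt (W (c m) y * W (c k) y) :=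
      Finset.single_le_sum (f := fun k => Real.sqrt (W (c m) y * W (c k) y))
        (fun k _ => Real.sqrt_nonneg _) hmem
    exact h1.trans h2
  · rw [if_neg h, mul_zero]
    exact Finset.sum_nonneg fun k _ => Real.sqrt_nonneg _

/-- Lemma 1, finite-length form: with probability at least `1 - 1/γ`,
the ML error probability of message `m` is at most
`γ^ρ * ((M'-1) * ∑_{x,x'} Q x Q x' Z(x,x')^{1/ρ})^ρ`. -/
theorem lemma1_finite_length
    {𝒳 𝒴 : Type*} [Fintype 𝒳] [Fintype 𝒴] [Nonempty 𝒳] [Nonempty 𝒴]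
    (n : ℕ) (hn : 1 ≤ n)
    (W : (Fin n → 𝒳) → (Fin n → 𝒴) → ℝ) (hW : IsChannel W)
    (Q : (Fin n → 𝒳) → ℝ) (M' : ℕ) (hM' : 2 ≤ M')
    (μ : (Fin M' → (Fin n → 𝒳)) → ℝ) (hμ : PairwiseIndepEnsemble μ Q)
    (ρ : ℝ) (hρ : 1 ≤ ρ) (γ : ℝ) (hγ : 0 < γ) (m : Fin M') :
    1 - 1/γ ≤ pmfProb μ (fun c =>
      Pem W c m ≤
        γ ^ ρ * (((M' : ℝ) - 1) * ∑ x, ∑ x', Q x * Q x' * Bhat W x x' ^ (1/ρ)) ^ ρ) := by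
  classical
  obtain ⟨hμP, hQP, hmarg, hpair⟩ := hμ
  set f : (Fin n → 𝒳) → (Fin n → 𝒳) → ℝ := fun x x' => Bhat W x x' ^ (1/ρ) with hf
  have hf0 : ∀ x x', 0 ≤ f x x' := fun x x' =>
    Real.rpow_nonneg (Finset.sum_nonneg fun y _ => Real.sqrt_nonneg _) _
  set T : ℝ := ∑ x, ∑ x', Q x * Q x' * f x x' with hT
  have hT0 : 0 ≤ T := Finset.sum_nonneg fun x _ => Finset.sum_nonneg fun x' _ =>
    mul_nonneg (mul_nonneg (hQP.1 x) (hQP.1 x')) (hf0 x x')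
  set U : (Fin M' → (Fin n → 𝒳)) → ℝ :=
    fun c => ∑ k ∈ Finset.univ.erase m, f (c m) (c k) with hU
  have hU0 : ∀ c, 0 ≤ U c := fun c =>
    Finset.sum_nonneg fun k _ => hf0 _ _
  -- expectation of U
  have hexp : ∑ c, μ c * U c = ((M' : ℝ) - 1) * T := by
    have step1 : ∑ c, μ c * U c
        = ∑ k ∈ Finset.univ.erase m, ∑ c, μ c * f (c m) (c k) := by
      have : ∑ c, μ c * U c = ∑ c, ∑ k ∈ Finset.univ.erase m, μ c * f (c m) (c k) :=
        Finset.sum_congr rfl fun c _ => by rw [Finset.mul_sum]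
      rw [this, Finset.sum_comm]
    have step2 : ∀ k ∈ Finset.univ.erase m, ∑ c, μ c * f (c m) (c k) = T := by
      intro k hk
      have hkm : m ≠ k := fun h => (Finset.mem_erase.1 hk).1 h.symm
      have hTe : T = ∑ x, ∑ x', pmfProb μ (fun c => c m = x ∧ c k = x') * f x x' := by
        rw [hT]
        exact Finset.sum_congr rfl fun x _ => Finset.sum_congr rfl fun x' _ => by
          rw [hpair m k hkm x x']
      rw [hTe]
      simp only [pmfProb]
      symm
      simp only [Finset.sum_mul, ite_mul, zero_mul]
      refine Eq.trans (Finset.sum_congr rfl fun x _ => Finset.sum_comm) ?_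
      rw [Finset.sum_comm]
      refine Finset.sum_congr rfl fun c _ => ?_
      simp [ite_and, Finset.sum_ite_eq]
    rw [step1, Finset.sum_congr rfl step2, Finset.sum_const]
    have hcard : (Finset.univ.erase m).card = M' - 1 := by
      rw [Finset.card_erase_of_mem (Finset.mem_univ m), Finset.card_univ, Fintype.card_fin]
    rw [hcard, nsmul_eq_mul, Nat.cast_sub (by omega : 1 ≤ M'), Nat.cast_one]
  -- Markov
  have hmar := aux_pmf_markov μ ⟨hμP.1, hμP.2⟩ U hU0 hγ
  rw [hexp] at hmar
  refine hmar.trans ?_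
  unfold pmfProb
  refine Finset.sum_le_sum fun c _ => ?_
  by_cases hc : U c ≤ γ * (((M' : ℝ) - 1) * T)
  · have hE0 : 0 ≤ ((M' : ℝ) - 1) * T := by
      have : (1:ℝ) ≤ (M' : ℝ) := by exact_mod_cast (by omega : 1 ≤ M')
      exact mul_nonneg (by linarith) hT0
    have htarget : Pem W c m ≤ γ ^ ρ * (((M' : ℝ) - 1) * T) ^ ρ := by
      have h1 : Pem W c m ≤ ∑ k ∈ Finset.univ.erase m, Bhat W (c m) (c k) :=
        aux_Pem_le_sum_bhat W hW c m
      have h2 : ∑ k ∈ Finset.univ.erase m, Bhat W (c m) (c k) ≤ (U c) ^ ρ :=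
        aux_sum_le_rpow_sum_rpow _ _
          (fun k _ => Finset.sum_nonneg fun y _ => Real.sqrt_nonneg _) hρ
      have h3 : (U c) ^ ρ ≤ (γ * (((M' : ℝ) - 1) * T)) ^ ρ :=
        Real.rpow_le_rpow (hU0 c) hc (by linarith)
      have h4 : (γ * (((M' : ℝ) - 1) * T)) ^ ρ = γ ^ ρ * (((M' : ℝ) - 1) * T) ^ ρ :=
        Real.mul_rpow hγ.le hE0
      calc Pem W c m ≤ (U c) ^ ρ := h1.trans h2
        _ ≤ _ := h3
        _ = _ := h4
    rw [if_pos hc, if_pos htarget]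
  · by_cases hc2 : Pem W c m ≤ γ ^ ρ * (((M' : ℝ) - 1) * T) ^ ρ
    · simp [hc, hc2, hμP.1 c]
    · simp [hc, hc2]
end

section
/- (Finite-length form of Theorem 1.) Let μ be a pairwise-independent ensemble with M' ≥ 2 codewords and marginal Q, let ρ ≥ 1 and γ > 1, and define Φ(c) = #{ m ∈ {1,…,M'} : P_{e,m}(c) ≤ γ^ρ · ( (M' − 1) · ∑_{x,x'∈𝒳^n} Q(x)Q(x')·Z(x,x')^{1/ρ} )^ρ }. Then μ[ Φ(C) ≥ M'(1 − 1/√γ) ] ≥ 1 − 1/√γ. -/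
open scoped Classical
open scoped NNReal

/- ### Auxiliary lemmas -/

/-- Two-term subadditivity of `x ↦ x ^ p` for `0 ≤ p ≤ 1` on nonnegative reals. -/
lemma aux_rpow_add_le {a b p : ℝ} (ha : 0 ≤ a) (hb : 0 ≤ b) (hp : 0 ≤ p) (hp1 : p ≤ 1) :
    (a + b) ^ p ≤ a ^ p + b ^ p := by
  have h := NNReal.rpow_add_le_add_rpow a.toNNReal b.toNNReal hp hp1
  have h' : ((a.toNNReal + b.toNNReal) ^ p : ℝ≥0) ≤
      ((a.toNNReal ^ p + b.toNNReal ^ p : ℝ≥0)) := h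
  have := NNReal.coe_le_coe.mpr h'
  simpa [NNReal.coe_rpow, Real.coe_toNNReal a ha, Real.coe_toNNReal b hb] using this

/-- Finite-sum subadditivity of `x ↦ x ^ p` for `0 < p ≤ 1`. -/
lemma aux_sum_rpow_le {ι : Type*} (t : Finset ι) (f : ι → ℝ) (hf : ∀ i ∈ t, 0 ≤ f i)
    {p : ℝ} (hp : 0 < p) (hp1 : p ≤ 1) :
    (∑ i ∈ t, f i) ^ p ≤ ∑ i ∈ t, f i ^ p := by
  induction t using Finset.cons_induction with
  | empty => simp [Real.zero_rpow hp.ne']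
  | cons a t ha ih =>
    rw [Finset.sum_cons, Finset.sum_cons]
    have h1 : 0 ≤ f a := hf a (Finset.mem_cons_self a t)
    have h2 : ∀ i ∈ t, 0 ≤ f i := fun i hi => hf i (Finset.mem_cons_of_mem hi)
    calc (f a + ∑ i ∈ t, f i) ^ p ≤ f a ^ p + (∑ i ∈ t, f i) ^ p :=
          aux_rpow_add_le h1 (Finset.sum_nonneg h2) hp.le hp1
      _ ≤ f a ^ p + ∑ i ∈ t, f i ^ p := by
          exact add_le_add (le_refl _) (ih h2)

/-- Markov's inequality for finite pmfs. -/
lemma aux_markov {α : Type*} [Fintype α] (μ f : α → ℝ) (hμ : ∀ a, 0 ≤ μ a)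
    (hf : ∀ a, 0 ≤ f a) {t : ℝ} (ht : 0 < t) :
    pmfProb μ (fun a => t < f a) ≤ pmfExp μ f / t := by
  rw [le_div_iff₀ ht]
  unfold pmfProb pmfExp
  rw [Finset.sum_mul]
  apply Finset.sum_le_sum
  intro a _
  by_cases h : t < f a
  · simp only [h, if_true]
    exact mul_le_mul_of_nonneg_left h.le (hμ a)
  · simp only [h, if_false, zero_mul]
    exact mul_nonneg (hμ a) (hf a)

/-- Complement rule for `pmfProb`. -/
lemma aux_compl {α : Type*} [Fintype α] {μ : α → ℝ} (h : IsPMF μ) (S : α → Prop) :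
    pmfProb μ S = 1 - pmfProb μ (fun a => ¬ S a) := by
  unfold pmfProb
  rw [← h.2, ← Finset.sum_sub_distrib]
  apply Finset.sum_congr rfl
  intro a _
  by_cases hS : S a <;> simp [hS]

/-- Expectation of a pairwise function under a pairwise-independent ensemble. -/
lemma aux_pair_exp {𝒳 : Type*} [Fintype 𝒳] {M : ℕ}
    {μ : (Fin M → 𝒳) → ℝ} {Q : 𝒳 → ℝ} (hμ : PairwiseIndepEnsemble μ Q)
    {m k : Fin M} (hmk : m ≠ k) (g : 𝒳 → 𝒳 → ℝ) :
    pmfExp μ (fun c => g (c m) (c k)) = ∑ x, ∑ x', Q x * Q x' * g x x' := by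
  have key : ∀ c : Fin M → 𝒳,
      μ c * g (c m) (c k)
        = ∑ x, ∑ x', (if c m = x ∧ c k = x' then μ c else 0) * g x x' := by
    intro c
    have : ∀ x, ∑ x', (if c m = x ∧ c k = x' then μ c else 0) * g x x'
        = if c m = x then μ c * g x (c k) else 0 := by
      intro x
      by_cases hx : c m = x
      · simp only [hx, true_and, if_true]
        rw [Finset.sum_eq_single (c k)]
        · simp
        · intro b _ hb; simp [Ne.symm hb]
        · simp
      · simp [hx]
    rw [Finset.sum_congr rfl (fun x _ => this x)]
    rw [Finset.sum_eq_single (c m)]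
    · simp
    · intro b _ hb; simp [Ne.symm hb]
    · simp
  unfold pmfExp
  rw [Finset.sum_congr rfl (fun c _ => key c)]
  rw [Finset.sum_comm]
  apply Finset.sum_congr rfl
  intro x _
  rw [Finset.sum_comm]
  apply Finset.sum_congr rfl
  intro x' _
  rw [← Finset.sum_mul]
  have h0 := hμ.2.2.2 m k hmk x x'
  unfold pmfProb at h0
  have h1 : (∑ i : Fin M → 𝒳, if i m = x ∧ i k = x' then μ i else 0) = Q x * Q x' := by
    rw [← h0]
    apply Finset.sum_congr rfl
    intro i _
    congr 1
  rw [h1]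

/-- Sum of indicators equals filter cardinality. -/
lemma aux_sum_ind {α : Type*} [Fintype α] (P : α → Prop) :
    ∑ a, (if P a then (1:ℝ) else 0) = ((Finset.univ.filter P).card : ℝ) := by
  simp [Finset.sum_ite_eq, Finset.sum_boole]

/-- finite-length form of Theorem 1: with probability at least
`1 - 1/√γ`, at least a fraction `1 - 1/√γ` of the `M'` codewords satisfy the
expurgated bound. -/
theorem theorem1_finite_length
    {𝒳 𝒴 : Type*} [Fintype 𝒳] [Fintype 𝒴] [Nonempty 𝒳] [Nonempty 𝒴]
    (n : ℕ) (hn : 1 ≤ n)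
    (W : (Fin n → 𝒳) → (Fin n → 𝒴) → ℝ) (hW : IsChannel W)
    (Q : (Fin n → 𝒳) → ℝ) (M' : ℕ) (hM' : 2 ≤ M')
    (μ : (Fin M' → (Fin n → 𝒳)) → ℝ) (hμ : PairwiseIndepEnsemble μ Q)
    (ρ : ℝ) (hρ : 1 ≤ ρ) (γ : ℝ) (hγ : 1 < γ)
    (Φ : (Fin M' → (Fin n → 𝒳)) → ℕ)
    (hΦ : ∀ c, Φ c = (Finset.univ.filter (fun m : Fin M' =>
      Pem W c m ≤
        γ ^ ρ *
          (((M' : ℝ) - 1) * ∑ x, ∑ x', Q x * Q x' * Bhat W x x' ^ (1/ρ)) ^ ρ)).card) :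
    1 - 1 / Real.sqrt γ ≤
      pmfProb μ (fun c => (M' : ℝ) * (1 - 1 / Real.sqrt γ) ≤ (Φ c : ℝ)) := by
  -- basic positivity facts
  have hγ0 : (0:ℝ) < γ := lt_trans one_pos hγ
  have hsγ : 0 < Real.sqrt γ := Real.sqrt_pos.mpr hγ0
  have hρ0 : (0:ℝ) < ρ := lt_of_lt_of_le one_pos hρ
  have hs0 : (0:ℝ) < 1/ρ := by positivity
  have hs1 : (1:ℝ)/ρ ≤ 1 := by
    rw [div_le_one hρ0]; exact hρ
  have hμ0 : ∀ c, 0 ≤ μ c := hμ.1.1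
  have hQ0 : ∀ x, 0 ≤ Q x := hμ.2.1.1
  have hW0 := hW.1
  have hM0 : (0:ℝ) < (M' : ℝ) := by
    have : (0:ℕ) < M' := lt_of_lt_of_le (by norm_num) hM'
    exact_mod_cast this
  -- notation
  set B0 : ℝ := ∑ x, ∑ x', Q x * Q x' * Bhat W x x' ^ (1/ρ) with hB0def
  set B : ℝ := ((M' : ℝ) - 1) * B0 with hBdef
  set T : ℝ := γ ^ ρ * B ^ ρ with hTdef
  have hBhat0 : ∀ x x', 0 ≤ Bhat W x x' := fun x x' =>
    Finset.sum_nonneg fun y _ => Real.sqrt_nonneg _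
  have hB00 : 0 ≤ B0 :=
    Finset.sum_nonneg fun x _ => Finset.sum_nonneg fun x' _ =>
      mul_nonneg (mul_nonneg (hQ0 x) (hQ0 x')) (Real.rpow_nonneg (hBhat0 _ _) _)
  have hB0 : 0 ≤ B := by
    apply mul_nonneg _ hB00
    have : (1:ℝ) ≤ (M':ℝ) := by
      have : (1:ℕ) ≤ M' := le_trans (by norm_num) hM'
      exact_mod_cast this
    linarith
  have hPem0 : ∀ (c : Fin M' → (Fin n → 𝒳)) (m : Fin M'), 0 ≤ Pem W c m := by
    intro c m
    apply Finset.sum_nonneg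
    intro y _
    apply mul_nonneg (hW0 _ _)
    split <;> norm_num
  -- Step 1: Pem is bounded by the sum of Bhattacharyya coefficients
  have hPemB : ∀ (c : Fin M' → (Fin n → 𝒳)) m,
      Pem W c m ≤ ∑ k ∈ Finset.univ.erase m, Bhat W (c m) (c k) := by
    intro c m
    have h1 : Pem W c m ≤
        ∑ y, ∑ k ∈ Finset.univ.erase m, Real.sqrt (W (c m) y * W (c k) y) := by
      apply Finset.sum_le_sum
      intro y _
      by_cases hE : ∃ k, k ≠ m ∧ W (c m) y ≤ W (c k) y
      · rw [if_pos hE, mul_one]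
        obtain ⟨k, hk, hle⟩ := hE
        have hm : W (c m) y ≤ Real.sqrt (W (c m) y * W (c k) y) := by
          conv_lhs => rw [← Real.sqrt_mul_self (hW0 (c m) y)]
          exact Real.sqrt_le_sqrt (mul_le_mul_of_nonneg_left hle (hW0 _ _))
        refine le_trans hm ?_
        apply Finset.single_le_sum (f := fun k => Real.sqrt (W (c m) y * W (c k) y))
          (fun i _ => Real.sqrt_nonneg _)
        exact Finset.mem_erase.mpr ⟨hk, Finset.mem_univ k⟩
      · rw [if_neg hE, mul_zero]
        exact Finset.sum_nonneg fun i _ => Real.sqrt_nonneg _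
    rw [Finset.sum_comm] at h1
    exact h1
  -- Step 2: per-message expectation bound for f = Pem^{1/ρ}
  have hexp : ∀ m : Fin M',
      pmfExp μ (fun c => Pem W c m ^ (1/ρ)) ≤ B := by
    intro m
    have hstep : ∀ c, Pem W c m ^ (1/ρ) ≤
        ∑ k ∈ Finset.univ.erase m, Bhat W (c m) (c k) ^ (1/ρ) := by
      intro c
      calc Pem W c m ^ (1/ρ)
          ≤ (∑ k ∈ Finset.univ.erase m, Bhat W (c m) (c k)) ^ (1/ρ) :=
            Real.rpow_le_rpow (hPem0 c m) (hPemB c m) hs0.le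
        _ ≤ ∑ k ∈ Finset.univ.erase m, Bhat W (c m) (c k) ^ (1/ρ) :=
            aux_sum_rpow_le _ _ (fun k _ => hBhat0 _ _) hs0 hs1
    have h1 : pmfExp μ (fun c => Pem W c m ^ (1/ρ)) ≤
        pmfExp μ (fun c => ∑ k ∈ Finset.univ.erase m, Bhat W (c m) (c k) ^ (1/ρ)) := by
      unfold pmfExp
      exact Finset.sum_le_sum fun c _ =>
        mul_le_mul_of_nonneg_left (hstep c) (hμ0 c)
    have h2 : pmfExp μ (fun c => ∑ k ∈ Finset.univ.erase m, Bhat W (c m) (c k) ^ (1/ρ))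
        = ∑ k ∈ Finset.univ.erase m,
            pmfExp μ (fun c => Bhat W (c m) (c k) ^ (1/ρ)) := by
      unfold pmfExp
      have hms : ∀ c : Fin M' → (Fin n → 𝒳),
          μ c * (∑ k ∈ Finset.univ.erase m, Bhat W (c m) (c k) ^ (1/ρ))
            = ∑ k ∈ Finset.univ.erase m, μ c * Bhat W (c m) (c k) ^ (1/ρ) :=
        fun c => Finset.mul_sum _ _ _
      rw [Finset.sum_congr rfl (fun c _ => hms c), Finset.sum_comm]
    have h3 : ∀ k ∈ Finset.univ.erase m,
        pmfExp μ (fun c => Bhat W (c m) (c k) ^ (1/ρ)) = B0 := by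
      intro k hk
      have hmk : m ≠ k := (Finset.mem_erase.mp hk).1.symm
      exact aux_pair_exp hμ hmk (fun x x' => Bhat W x x' ^ (1/ρ))
    refine h1.trans ?_
    rw [h2, Finset.sum_congr rfl h3, Finset.sum_const]
    have hcard : (Finset.univ.erase m).card = M' - 1 := by
      rw [Finset.card_erase_of_mem (Finset.mem_univ m), Finset.card_univ, Fintype.card_fin]
    have hc : ((M' - 1 : ℕ) : ℝ) = (M' : ℝ) - 1 := by
      have h1' : (1:ℕ) ≤ M' := le_trans (by norm_num) hM'
      push_cast [Nat.cast_sub h1']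
      ring
    rw [hcard, nsmul_eq_mul, hc, hBdef]
  -- Step 3: per-message probability bound
  have hbad : ∀ m : Fin M', pmfProb μ (fun c => T < Pem W c m) ≤ 1/γ := by
    intro m
    have hiff : ∀ c, (T < Pem W c m) ↔ (γ * B < Pem W c m ^ (1/ρ)) := by
      intro c
      have hT : T = (γ * B) ^ ρ := by
        rw [hTdef, Real.mul_rpow hγ0.le hB0]
      have h := Real.lt_rpow_inv_iff_of_pos (mul_nonneg hγ0.le hB0) (hPem0 c m) hρ0
      rw [← one_div] at h
      rw [hT]
      exact h.symm
    have heq : (fun c => T < Pem W c m) = (fun c => γ * B < Pem W c m ^ (1/ρ)) :=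
      funext fun c => propext (hiff c)
    rw [heq]
    rcases eq_or_lt_of_le hB0 with hBzero | hBpos
    · -- B = 0 : the expectation is 0 and the event has zero probability
      have hE0 : pmfExp μ (fun c => Pem W c m ^ (1/ρ)) ≤ 0 := by
        rw [← hBzero] at hexp; exact hexp m
      have hterm : ∀ c, μ c * Pem W c m ^ (1/ρ) = 0 := by
        have hnn : ∀ c ∈ Finset.univ, 0 ≤ μ c * Pem W c m ^ (1/ρ) :=
          fun c _ => mul_nonneg (hμ0 c) (Real.rpow_nonneg (hPem0 c m) _)
        have hsum0 : pmfExp μ (fun c => Pem W c m ^ (1/ρ)) = 0 :=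
          le_antisymm hE0 (Finset.sum_nonneg hnn)
        intro c
        exact (Finset.sum_eq_zero_iff_of_nonneg hnn).mp hsum0 c (Finset.mem_univ c)
      have : pmfProb μ (fun c => γ * B < Pem W c m ^ (1/ρ)) ≤ 0 := by
        unfold pmfProb
        apply Finset.sum_nonpos
        intro c _
        by_cases h : γ * B < Pem W c m ^ (1/ρ)
        · simp only [h, if_true]
          have hpos : 0 < Pem W c m ^ (1/ρ) := by
            rw [← hBzero] at h; simpa using h
          have := hterm c
          nlinarith [hμ0 c]
        · rw [if_neg h]
      calc pmfProb μ (fun c => γ * B < Pem W c m ^ (1/ρ)) ≤ 0 := this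
        _ ≤ 1/γ := by positivity
    · -- B > 0 : Markov
      have ht : 0 < γ * B := mul_pos hγ0 hBpos
      calc pmfProb μ (fun c => γ * B < Pem W c m ^ (1/ρ))
          ≤ pmfExp μ (fun c => Pem W c m ^ (1/ρ)) / (γ * B) :=
            aux_markov μ _ hμ0 (fun c => Real.rpow_nonneg (hPem0 c m) _) ht
        _ ≤ B / (γ * B) := by gcongr; exact hexp m
        _ = 1/γ := by field_simp
  -- Step 4: count the bad messages
  set N : (Fin M' → (Fin n → 𝒳)) → ℝ :=
    fun c => ∑ m, (if T < Pem W c m then (1:ℝ) else 0) with hNdef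
  have hN0 : ∀ c, 0 ≤ N c := by
    intro c
    apply Finset.sum_nonneg
    intro m _
    split <;> norm_num
  have hNPhi : ∀ c, N c = (M' : ℝ) - (Φ c : ℝ) := by
    intro c
    simp only [hNdef]
    have h1 : ∑ m, (if T < Pem W c m then (1:ℝ) else 0)
        = ((Finset.univ.filter (fun m : Fin M' => T < Pem W c m)).card : ℝ) :=
      aux_sum_ind _
    rw [h1, hΦ c]
    have h2 : (Finset.univ.filter (fun m : Fin M' => Pem W c m ≤ T)).card
        + (Finset.univ.filter (fun m : Fin M' => T < Pem W c m)).card = M' := by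
      have := Finset.card_filter_add_card_filter_not
        (s := (Finset.univ : Finset (Fin M')))
        (p := fun m : Fin M' => Pem W c m ≤ T)
      simp only [not_le] at this
      simpa [Finset.card_univ] using this
    have := congrArg (fun k : ℕ => (k : ℝ)) h2
    push_cast at this
    linarith
  have hEN : pmfExp μ N ≤ (M' : ℝ) * (1/γ) := by
    have h1 : pmfExp μ N = ∑ m, pmfProb μ (fun c => T < Pem W c m) := by
      unfold pmfExp pmfProb
      have hterm : ∀ c, μ c * N c = ∑ m, (if T < Pem W c m then μ c else 0) := by
        intro c
        simp only [hNdef]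
        rw [Finset.mul_sum]
        apply Finset.sum_congr rfl
        intro m _
        split <;> simp
      rw [Finset.sum_congr rfl (fun c _ => hterm c), Finset.sum_comm]
    rw [h1]
    calc ∑ m, pmfProb μ (fun c => T < Pem W c m) ≤ ∑ _m : Fin M', 1/γ :=
          Finset.sum_le_sum fun m _ => hbad m
      _ = (M' : ℝ) * (1/γ) := by
          rw [Finset.sum_const, Finset.card_univ, Fintype.card_fin, nsmul_eq_mul]
  -- Step 5: Markov on the number of bad messages
  have ht : (0:ℝ) < (M' : ℝ) / Real.sqrt γ := by positivity
  have hss : Real.sqrt γ * Real.sqrt γ = γ := Real.mul_self_sqrt hγ0.le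
  have htail : pmfProb μ (fun c => (M' : ℝ) / Real.sqrt γ < N c) ≤ 1 / Real.sqrt γ := by
    calc pmfProb μ (fun c => (M' : ℝ) / Real.sqrt γ < N c)
        ≤ pmfExp μ N / ((M' : ℝ) / Real.sqrt γ) := aux_markov μ N hμ0 hN0 ht
      _ ≤ ((M' : ℝ) * (1/γ)) / ((M' : ℝ) / Real.sqrt γ) := by gcongr
      _ = 1 / Real.sqrt γ := by
          field_simp
          nlinarith [hss, hM0, hsγ]
  have hevent : (fun c => ¬ ((M' : ℝ) * (1 - 1 / Real.sqrt γ) ≤ (Φ c : ℝ)))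
      = (fun c => (M' : ℝ) / Real.sqrt γ < N c) := by
    funext c
    apply propext
    rw [not_le]
    have hN := hNPhi c
    have hid : (M' : ℝ) * (1 - 1 / Real.sqrt γ) = (M' : ℝ) - (M' : ℝ) / Real.sqrt γ := by
      ring
    constructor
    · intro h; rw [hid] at h; linarith
    · intro h; rw [hid]; linarith
  rw [aux_compl hμ.1, hevent]
  linarith [htail]
end
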